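/- For every countable ordinal α with α > 0, the topology τ_α on A_α has no isolated points. -/

import Mathlib

open Set

/-- A subtree of `ω^{<ω}`: a set of finite sequences of naturals closed under
initial segments (prefixes). -/
def IsTree (T : Set (List ℕ)) : Prop := ∀ s ∈ T, ∀ t : List ℕ, t <+: s → t ∈ T

/-- `T` has an infinite branch. -/
def HasInfiniteBranch (T : Set (List ℕ)) : Prop :=
  ∃ x : ℕ → ℕ, ∀ n : ℕ, (List.range n).map x ∈ T

/-- A well-founded tree: a subtree of `ω^{<ω}` with no infinite branch. -/
def IsWFTree (T : Set (List ℕ)) : Prop := IsTree T ∧ ¬ HasInfiniteBranch T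

/-- The child relation of `T`: `childRel T s t` iff `s = t⌢⟨m⟩ ∈ T` for some `m`. -/
def childRel (T : Set (List ℕ)) (s t : List ℕ) : Prop := s ∈ T ∧ ∃ m : ℕ, s = t ++ [m]

/-- The canonical rank function of a well-founded tree:
`h_T ν = sup { h_T (ν⌢⟨m⟩) + 1 : ν⌢⟨m⟩ ∈ T }`. -/
noncomputable def treeRank (T : Set (List ℕ)) (ν : List ℕ) : Ordinal :=
  @dite _ (WellFounded (childRel T)) (Classical.dec _) (fun h => (h.apply ν).rank) (fun _ => 0)

/-- `A_α`: the well-founded trees containing `⟨⟩` whose canonical rank at `⟨⟩` is `α`. -/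
def Atree (α : Ordinal) : Set (Set (List ℕ)) :=
  {T | IsWFTree T ∧ [] ∈ T ∧ treeRank T [] = α}

/-- `n^{≤ n}`: the finite sequences of length at most `n` with all entries `< n`. -/
def seqBelow (n : ℕ) : Set (List ℕ) := {l | l.length ≤ n ∧ ∀ x ∈ l, x < n}

/-- The basic τ_α-open set `U(n,T)` determined by `n ∈ ℕ` and `T ∈ A_α`. -/
def Unbhd (α : Ordinal) (n : ℕ) (T : ↥(Atree α)) : Set (↥(Atree α)) :=
  {T' | T'.1 ∩ seqBelow n = T.1 ∩ seqBelow n ∧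
    ∀ ν ∈ T.1 ∩ seqBelow n, treeRank T'.1 ν = treeRank T.1 ν}

/-- The topology `τ_α` on `A_α`, generated by the sets `U(n,T)`. -/
def tauTop (α : Ordinal) : TopologicalSpace ↥(Atree α) :=
  TopologicalSpace.generateFrom {s | ∃ (n : ℕ) (T : ↥(Atree α)), s = Unbhd α n T}

set_option linter.deprecated false

noncomputable def WellFounded.rank {β : Type*} {r : β → β → Prop} (hwf : WellFounded r) (a : β) :
    Ordinal := (hwf.apply a).rank

theorem WellFounded.rank_eq {β : Type*} {r : β → β → Prop} (hwf : WellFounded r) (a : β) :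
    hwf.rank a = ⨆ b : { b // r b a }, Order.succ (hwf.rank b.1) :=
  (hwf.apply a).rank_eq

theorem WellFounded.rank_lt_of_rel {β : Type*} {r : β → β → Prop} (hwf : WellFounded r) {a b : β}
    (h : r a b) : hwf.rank a < hwf.rank b :=
  Acc.rank_lt_of_rel _ h

lemma exists_desc {β : Type*} {r : β → β → Prop} (h : ¬ WellFounded r) :
    ∃ f : ℕ → β, ∀ n, r (f (n+1)) (f n) := by
  have h1 : ∃ a, ¬ Acc r a := by
    by_contra hc
    push_neg at hc
    exact h ⟨hc⟩
  have step : ∀ a : β, ¬ Acc r a → ∃ b, r b a ∧ ¬ Acc r b := by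
    intro a ha
    by_contra hc
    push_neg at hc
    exact ha (Acc.intro a fun b hb => hc b hb)
  choose g hg1 hg2 using step
  obtain ⟨a, ha⟩ := h1
  let F : ℕ → {a : β // ¬ Acc r a} :=
    fun n => Nat.rec ⟨a, ha⟩ (fun _ p => ⟨g p.1 p.2, hg2 p.1 p.2⟩) n
  exact ⟨fun n => (F n).1, fun n => hg1 _ _⟩

lemma wf_of_no_branch {T : Set (List ℕ)} (ht : IsTree T) (hb : ¬ HasInfiniteBranch T) :
    WellFounded (childRel T) := by
  by_contra h
  obtain ⟨g, hg⟩ := exists_desc h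
  have hmem : ∀ k, g k ∈ T := by
    intro k
    obtain ⟨hT1, m, hm⟩ := hg k
    exact ht _ hT1 _ (by rw [hm]; exact List.prefix_append _ _)
  have hpre : ∀ a b : ℕ, a ≤ b → g a <+: g b := by
    intro a b hab
    induction b, hab using Nat.le_induction with
    | base => exact List.prefix_rfl
    | succ b hab ih =>
      obtain ⟨_, m, hm⟩ := hg b
      exact ih.trans (by rw [hm]; exact List.prefix_append _ _)
  have hlen : ∀ k : ℕ, k ≤ (g k).length := by
    intro k
    induction k with
    | zero => exact Nat.zero_le _
    | succ k ih =>
      obtain ⟨_, m, hm⟩ := hg k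
      rw [hm, List.length_append]
      simpa using ih
  set x : ℕ → ℕ := fun i => (g (i+1)).getD i 0 with hx
  apply hb
  refine ⟨x, fun p => ?_⟩
  have hclaim : (List.range p).map x = (g p).take p := by
    apply List.ext_getElem
    · simp [Nat.min_eq_left (hlen p)]
    · intro i h1 h2
      simp only [List.getElem_map, List.getElem_range, List.getElem_take]
      have hip : i < p := by simpa using h1
      have hi1 : i < (g (i+1)).length := lt_of_lt_of_le (Nat.lt_succ_self i) (hlen (i+1))
      rw [hx]
      simp only [List.getD_eq_getElem _ _ hi1]
      exact (hpre (i+1) p (by omega)).getElem hi1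
  rw [hclaim]
  exact ht _ (hmem p) _ (List.take_prefix _ _)

lemma rank_congr {T T' : Set (List ℕ)} (hT : WellFounded (childRel T))
    (hT' : WellFounded (childRel T')) :
    ∀ ν : List ℕ, (∀ s, ν <+: s → (s ∈ T ↔ s ∈ T')) → hT.rank ν = hT'.rank ν := by
  intro ν
  induction ν using hT.induction with
  | _ ν IH =>
    intro hcone
    have hchild : ∀ b, childRel T b ν ↔ childRel T' b ν := by
      intro b
      constructor
      · rintro ⟨hbT, m, rfl⟩
        exact ⟨(hcone _ (List.prefix_append _ _)).mp hbT, m, rfl⟩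
      · rintro ⟨hbT, m, rfl⟩
        exact ⟨(hcone _ (List.prefix_append _ _)).mpr hbT, m, rfl⟩
    have heq : ∀ b, childRel T b ν → hT.rank b = hT'.rank b := by
      intro b hb
      obtain ⟨hbT, m, hbm⟩ := hb
      have hνb : ν <+: b := by rw [hbm]; exact List.prefix_append _ _
      exact IH b ⟨hbT, m, hbm⟩ (fun s hs => hcone s (hνb.trans hs))
    rw [hT.rank_eq, hT'.rank_eq]
    apply le_antisymm
    · rw [Ordinal.iSup_le_iff]
      rintro ⟨b, hb⟩
      rw [heq b hb]
      exact Ordinal.le_iSup (fun b : {b // childRel T' b ν} => Order.succ (hT'.rank b.1))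
        ⟨b, (hchild b).mp hb⟩
    · rw [Ordinal.iSup_le_iff]
      rintro ⟨b, hb⟩
      rw [← heq b ((hchild b).mpr hb)]
      exact Ordinal.le_iSup (fun b : {b // childRel T b ν} => Order.succ (hT.rank b.1))
        ⟨b, (hchild b).mpr hb⟩

lemma rank_mono {T T' : Set (List ℕ)} (hsub : T' ⊆ T) (hT : WellFounded (childRel T))
    (hT' : WellFounded (childRel T')) : ∀ ν, hT'.rank ν ≤ hT.rank ν := by
  intro ν
  induction ν using hT'.induction with
  | _ ν IH =>
    rw [hT'.rank_eq, Ordinal.iSup_le_iff]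
    rintro ⟨b, hb⟩
    have hbT : childRel T b ν := ⟨hsub hb.1, hb.2⟩
    calc Order.succ (hT'.rank b) ≤ Order.succ (hT.rank b) := Order.succ_le_succ (IH b hb)
      _ ≤ hT.rank ν := Order.succ_le_iff.mpr (hT.rank_lt_of_rel hbT)

lemma prefix_single {ν : List ℕ} {m : ℕ} (h : ν <+: [m]) : ν = [] ∨ ν = [m] := by
  cases ν with
  | nil => exact Or.inl rfl
  | cons a t =>
    rw [List.cons_prefix_cons] at h
    obtain ⟨rfl, ht⟩ := h
    rw [List.prefix_nil] at ht
    exact Or.inr (by rw [ht])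

lemma treeRank_eq {T : Set (List ℕ)} (h : WellFounded (childRel T)) (ν : List ℕ) :
    treeRank T ν = h.rank ν := dif_pos h

lemma cone_safe {n m : ℕ} (hm : n ≤ m) {ν : List ℕ} (hν : ν ∈ seqBelow n) (hne : ν ≠ [])
    {s : List ℕ} (hs : ν <+: s) : ¬ [m] <+: s := by
  intro hms
  rcases List.prefix_or_prefix_of_prefix hs hms with h | h
  · rcases prefix_single h with rfl | rfl
    · exact hne rfl
    · have := hν.2 m (by simp)
      omega
  · have hmν : m ∈ ν := h.subset (by simp)
    have := hν.2 m hmν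
    omega

lemma singleton_prefix_disj {j m : ℕ} (hjm : j ≠ m) {s : List ℕ} (hs : [j] <+: s) :
    ¬ [m] <+: s := by
  intro hms
  rcases List.prefix_or_prefix_of_prefix hs hms with h | h
  · rcases prefix_single h with h' | h'
    · simp at h'
    · exact hjm (by simpa using h')
  · rcases prefix_single h with h' | h'
    · simp at h'
    · exact hjm (by simpa using h'.symm)

lemma key (α : Ordinal) (hpos : 0 < α) (n : ℕ) (T : ↥(Atree α)) :
    ∃ T' : ↥(Atree α), T' ≠ T ∧ T' ∈ Unbhd α n T := by
  obtain ⟨⟨htA, hnbA⟩, hrootA, hrkA⟩ := T.2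
  set A := T.1 with hA
  have hwfA : WellFounded (childRel A) := wf_of_no_branch htA hnbA
  rw [treeRank_eq hwfA] at hrkA
  by_cases hB : ∀ m, n ≤ m → [m] ∈ A
  · -- removal case
    obtain ⟨m, hmn, hprop⟩ : ∃ m, n ≤ m ∧
        ∀ β < α, ∃ j, [j] ∈ A ∧ j ≠ m ∧ β < Order.succ (hwfA.rank [j]) := by
      by_cases hatt : ∃ j, [j] ∈ A ∧ Order.succ (hwfA.rank [j]) = α
      · obtain ⟨j₀, hj₀A, hj₀⟩ := hatt
        refine ⟨if j₀ = n then n+1 else n, by split <;> omega,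
          fun β hβ => ⟨j₀, hj₀A, ?_, hj₀ ▸ hβ⟩⟩
        split <;> omega
      · push_neg at hatt
        refine ⟨n, le_rfl, fun β hβ => ?_⟩
        have hnA : [n] ∈ A := hB n le_rfl
        have h1 : Order.succ (hwfA.rank [n]) < α := by
          have hlt : hwfA.rank [n] < hwfA.rank [] := hwfA.rank_lt_of_rel ⟨hnA, n, rfl⟩
          have h2 := Order.succ_le_iff.mpr hlt
          rw [hrkA] at h2
          exact lt_of_le_of_ne h2 (hatt n hnA)
        have hγ : ∃ b : {b // childRel A b []},
            max β (Order.succ (hwfA.rank [n])) < Order.succ (hwfA.rank b.1) := by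
          rw [← Ordinal.lt_iSup_iff, ← hwfA.rank_eq, hrkA]
          exact max_lt hβ h1
        obtain ⟨⟨b, hb⟩, hγ2⟩ := hγ
        obtain ⟨hbA, j, hbj⟩ := hb
        subst hbj
        simp only [List.nil_append] at hbA hγ2
        refine ⟨j, hbA, ?_, lt_of_le_of_lt (le_max_left _ _) hγ2⟩
        rintro rfl
        exact absurd hγ2 (not_lt.mpr (le_max_right _ _))
    set S : Set (List ℕ) := {s | s ∈ A ∧ ¬ [m] <+: s} with hS
    have hsub : S ⊆ A := fun s hs => hs.1
    have htS : IsTree S := fun s hs t hts => ⟨htA s hs.1 t hts, fun hmt => hs.2 (hmt.trans hts)⟩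
    have hnbS : ¬ HasInfiniteBranch S := fun ⟨x, hx⟩ => hnbA ⟨x, fun p => (hx p).1⟩
    have hwfS : WellFounded (childRel S) := wf_of_no_branch htS hnbS
    have hrootS : [] ∈ S := ⟨hrootA, by simp [List.prefix_nil]⟩
    have conej : ∀ j, j ≠ m → ∀ s, [j] <+: s → (s ∈ A ↔ s ∈ S) :=
      fun j hj s hs => ⟨fun h => ⟨h, singleton_prefix_disj hj hs⟩, fun h => h.1⟩
    have hrkS : hwfS.rank [] = α := by
      apply le_antisymm
      · rw [← hrkA]
        exact rank_mono hsub hwfA hwfS []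
      · apply le_of_forall_lt
        intro β hβ
        obtain ⟨j, hjA, hjm, hj⟩ := hprop β hβ
        have hjS : [j] ∈ S := (conej j hjm [j] List.prefix_rfl).mp hjA
        have h2 : hwfS.rank [j] < hwfS.rank [] := hwfS.rank_lt_of_rel ⟨hjS, j, rfl⟩
        calc β < Order.succ (hwfA.rank [j]) := hj
          _ = Order.succ (hwfS.rank [j]) := by rw [rank_congr hwfA hwfS [j] (conej j hjm)]
          _ ≤ hwfS.rank [] := Order.succ_le_iff.mpr h2
    have hSA : S ∈ Atree α := ⟨⟨htS, hnbS⟩, hrootS, by rw [treeRank_eq hwfS]; exact hrkS⟩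
    refine ⟨⟨S, hSA⟩, ?_, ?_, ?_⟩
    · intro h
      have h' : S = A := congrArg Subtype.val h
      have hmS : [m] ∈ S := by rw [h']; exact hB m hmn
      exact hmS.2 List.prefix_rfl
    · ext s
      constructor
      · rintro ⟨hs1, hs2⟩
        exact ⟨hs1.1, hs2⟩
      · rintro ⟨hs1, hs2⟩
        refine ⟨⟨hs1, fun hms => ?_⟩, hs2⟩
        have := hs2.2 m (hms.subset (by simp))
        omega
    · intro ν hν
      rw [treeRank_eq hwfS, treeRank_eq hwfA]
      by_cases hne : ν = []
      · rw [hne, hrkS, hrkA]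
      · exact (rank_congr hwfA hwfS ν
          (fun s hs => ⟨fun h => ⟨h, cone_safe hmn hν.2 hne hs⟩, fun h => h.1⟩)).symm
  · -- insertion case
    push_neg at hB
    obtain ⟨m, hmn, hm⟩ := hB
    set S : Set (List ℕ) := insert [m] A with hS
    have hsub : A ⊆ S := subset_insert _ _
    have htS : IsTree S := by
      rintro s (rfl | hsA) t hts
      · rcases prefix_single hts with rfl | rfl
        · exact Or.inr hrootA
        · exact Or.inl rfl
      · exact Or.inr (htA s hsA t hts)
    have hnbS : ¬ HasInfiniteBranch S := by
      rintro ⟨x, hx⟩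
      apply hnbA
      refine ⟨x, fun p => ?_⟩
      have h2 : (List.range (p+2)).map x ∈ S := hx (p+2)
      have h2A : (List.range (p+2)).map x ∈ A := by
        rcases h2 with h | h
        · exact absurd (congrArg List.length h) (by simp)
        · exact h
      have hpr : List.range p <+: List.range (p+2) := by
        have h3 := List.take_prefix p (List.range (p+2))
        rwa [List.take_range, show p ⊓ (p+2) = p by omega] at h3
      exact htA _ h2A _ (hpr.map x)
    have hwfS : WellFounded (childRel S) := wf_of_no_branch htS hnbS
    have hrootS : [] ∈ S := Or.inr hrootA
    have coneA : ∀ j, [j] ∈ A → ∀ s, [j] <+: s → (s ∈ A ↔ s ∈ S) := by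
      intro j hjA s hs
      refine ⟨fun h => Or.inr h, ?_⟩
      rintro (rfl | h)
      · rcases prefix_single hs with h' | h'
        · simp at h'
        · rw [h'] at hjA
          exact absurd hjA hm
      · exact h
    have hrkS : hwfS.rank [] = α := by
      apply le_antisymm
      · rw [hwfS.rank_eq, Ordinal.iSup_le_iff]
        rintro ⟨b, hb⟩
        obtain ⟨hbS, j, hbj⟩ := hb
        subst hbj
        simp only [List.nil_append] at hbS ⊢
        rcases hbS with h | h
        · -- b = [m], rank 0
          rw [h]
          have hzero : hwfS.rank [m] = 0 := by
            haveI : IsEmpty {b // childRel S b [m]} := by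
              constructor
              rintro ⟨c, hcS, k, hck⟩
              subst hck
              rcases hcS with h' | h'
              · simp at h'
              · exact hm (htA _ h' _ (List.prefix_append _ _))
            rw [hwfS.rank_eq, ciSup_of_empty]
            exact Ordinal.bot_eq_zero
          rw [hzero]
          exact Order.succ_le_iff.mpr hpos
        · have heq := rank_congr hwfA hwfS [j] (coneA j h)
          rw [← heq]
          have hlt : hwfA.rank [j] < hwfA.rank [] := hwfA.rank_lt_of_rel ⟨h, j, rfl⟩
          rw [hrkA] at hlt
          exact Order.succ_le_iff.mpr hlt
      · rw [← hrkA]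
        exact rank_mono hsub hwfS hwfA []
    have hSA : S ∈ Atree α := ⟨⟨htS, hnbS⟩, hrootS, by rw [treeRank_eq hwfS]; exact hrkS⟩
    refine ⟨⟨S, hSA⟩, ?_, ?_, ?_⟩
    · intro h
      have h' : S = A := congrArg Subtype.val h
      exact hm (by rw [← h']; exact mem_insert _ _)
    · ext s
      constructor
      · rintro ⟨(rfl | hsA), hs2⟩
        · have := hs2.2 m (by simp)
          omega
        · exact ⟨hsA, hs2⟩
      · rintro ⟨hs1, hs2⟩
        exact ⟨Or.inr hs1, hs2⟩
    · intro ν hν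
      rw [treeRank_eq hwfS, treeRank_eq hwfA]
      by_cases hne : ν = []
      · rw [hne, hrkS, hrkA]
      · refine (rank_congr hwfA hwfS ν (fun s hs => ⟨fun h => Or.inr h, ?_⟩)).symm
        rintro (rfl | h)
        · exact absurd List.prefix_rfl (cone_safe hmn hν.2 hne hs)
        · exact h

lemma Unbhd_mono (α : Ordinal) {m n : ℕ} (hmn : m ≤ n) (T : ↥(Atree α)) :
    Unbhd α n T ⊆ Unbhd α m T := by
  have hsb : seqBelow m ⊆ seqBelow n := fun l hl => ⟨hl.1.trans hmn, fun x hx => lt_of_lt_of_le (hl.2 x hx) hmn⟩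
  have hcap : ∀ X : Set (List ℕ), X ∩ seqBelow m = (X ∩ seqBelow n) ∩ seqBelow m := by
    intro X
    rw [inter_assoc, inter_eq_right.mpr hsb]
  rintro T' ⟨h1, h2⟩
  constructor
  · rw [hcap T'.1, hcap T.1, h1]
  · intro ν hν
    exact h2 ν ⟨hν.1, hsb hν.2⟩

lemma Unbhd_self (α : Ordinal) (n : ℕ) (T : ↥(Atree α)) : T ∈ Unbhd α n T :=
  ⟨rfl, fun _ _ => rfl⟩

/-- For every countable ordinal `α > 0`, the topology `τ_α` on `A_α` has no isolated
points: no singleton is τ_α-open. -/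
theorem stmt8 (α : Ordinal) (hα : α.card ≤ Cardinal.aleph0) (hpos : 0 < α) :
    ∀ T : ↥(Atree α), ¬ @IsOpen ↥(Atree α) (tauTop α) {T} := by
  intro T hopen
  have hgen : ∀ s, TopologicalSpace.GenerateOpen
      {s | ∃ (n : ℕ) (T₀ : ↥(Atree α)), s = Unbhd α n T₀} s → T ∈ s →
      ∃ n, Unbhd α n T ⊆ s := by
    intro s hs
    induction hs with
    | basic s hs =>
      obtain ⟨n, T₀, rfl⟩ := hs
      intro hT
      refine ⟨n, fun T' hT' => ?_⟩
      refine ⟨hT'.1.trans hT.1, fun ν hν => ?_⟩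
      have hν' : ν ∈ T.1 ∩ seqBelow n := by rw [hT.1]; exact hν
      rw [hT'.2 ν hν', hT.2 ν hν]
    | univ => exact fun _ => ⟨0, subset_univ _⟩
    | inter s t hs ht ihs iht =>
      rintro ⟨hTs, hTt⟩
      obtain ⟨n1, h1⟩ := ihs hTs
      obtain ⟨n2, h2⟩ := iht hTt
      exact ⟨max n1 n2, fun T' hT' =>
        ⟨h1 (Unbhd_mono α (le_max_left _ _) T hT'), h2 (Unbhd_mono α (le_max_right _ _) T hT')⟩⟩
    | sUnion S hS ih =>
      rintro ⟨s, hsS, hTs⟩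
      obtain ⟨n, hn⟩ := ih s hsS hTs
      exact ⟨n, hn.trans (subset_sUnion_of_mem hsS)⟩
  obtain ⟨n, hn⟩ := hgen {T} hopen rfl
  obtain ⟨T', hne, hmem⟩ := key α hpos n T
  exact hne (hn hmem)
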